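/- Let N ≥ 1, ω = e^{2πi/N}, and let D be a unital C*-algebra. For an arbitrary family of elements S_{lm} ∈ D indexed by l, m ∈ ℤ/N, and for j, k ∈ ℤ/N, define the matrix T_{jk} ∈ Matrix (ℤ/N) (ℤ/N) D by T_{jk} := (1/N) Σ_{l,m ∈ ℤ/N} ω^{(j−k)l} · S_{lm} · E_{j−m, k−m}, where E_{pq} denotes the matrix with 1·1_D in position (p,q) and 0 elsewhere, and ω^{(j−k)l} is well-defined since ω^N = 1. Let X̂, Ẑ ∈ Matrix (ℤ/N) (ℤ/N) D be the scalar matrices with entries X̂_{pq} = δ_{pq} ω^p · 1_D and Ẑ_{pq} = δ_{p, q+1} · 1_D (the generalized Pauli matrices). Then for all j, k ∈ ℤ/N: X̂ · T_{jk} · X̂^* = ω^{j−k} · T_{jk} and Ẑ^* · T_{jk} · Ẑ = T_{j−1, k−1}. -/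

import Mathlib

theorem statement_14 (N : ℕ) [NeZero N]
    (D : Type*) [NormedRing D] [StarRing D] [CStarRing D] [CompleteSpace D]
    [NormedAlgebra ℂ D] [StarModule ℂ D]
    (ω : ℂ) (hω : ω = Complex.exp (2 * Real.pi * Complex.I / N))
    -- an arbitrary family of elements S_{lm} of D
    (S : ZMod N → ZMod N → D)
    -- the matrices T_{jk} = (1/N) Σ_{l,m} ω^{(j-k)l} S_{lm} E_{j-m,k-m}
    (T : ZMod N → ZMod N → Matrix (ZMod N) (ZMod N) D)
    (hT : ∀ j k, T j k = (N : ℂ)⁻¹ • ∑ l, ∑ m,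
      (ω ^ (((j - k) * l).val)) • Matrix.single (j - m) (k - m) (S l m))
    -- the generalized Pauli matrices over D
    (X Z : Matrix (ZMod N) (ZMod N) D)
    (hX : X = Matrix.diagonal fun p => (ω ^ p.val) • (1 : D))
    (hZ : Z = Matrix.of fun p q => if p = q + 1 then (1 : D) else 0) :
    (∀ j k, X * T j k * star X = (ω ^ ((j - k).val)) • T j k) ∧
    (∀ j k, star Z * T j k * Z = T (j - 1) (k - 1)) := by
  have hN : (N : ℂ) ≠ 0 := Nat.cast_ne_zero.mpr (NeZero.ne N)
  have hω0 : ω ≠ 0 := by rw [hω]; exact Complex.exp_ne_zero _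
  have hω1 : ω ^ N = 1 := by
    rw [hω, ← Complex.exp_nat_mul, mul_div_cancel₀ _ hN, Complex.exp_two_pi_mul_I]
  have hmod : ∀ u : ℕ, ω ^ (u % N) = ω ^ u := by
    intro u
    conv_rhs => rw [← Nat.mod_add_div u N]
    rw [pow_add, pow_mul, hω1, one_pow, mul_one]
  have hval : ∀ a b : ZMod N, ω ^ a.val * ω ^ b.val = ω ^ (a + b).val := by
    intro a b
    rw [← pow_add, ZMod.val_add, hmod]
  have hconj : (starRingEnd ℂ) ω = ω⁻¹ := by
    rw [hω, ← Complex.exp_conj, ← Complex.exp_neg]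
    congr 1
    rw [map_div₀, map_mul, map_mul, Complex.conj_I, Complex.conj_ofReal, map_ofNat,
      map_natCast]
    ring
  have key : ∀ a b : ZMod N, ω ^ a.val * (starRingEnd ℂ) (ω ^ b.val) = ω ^ (a - b).val := by
    intro a b
    have h2 : ω ^ (a - b).val * ω ^ b.val = ω ^ a.val := by rw [hval, sub_add_cancel]
    rw [map_pow, hconj, inv_pow, eq_comm, ← h2, mul_assoc,
      mul_inv_cancel₀ (pow_ne_zero _ hω0), mul_one]
  have hstarf : (star fun p : ZMod N => ω ^ p.val • (1 : D)) =
      fun p => ((starRingEnd ℂ) (ω ^ p.val)) • (1 : D) := by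
    funext p
    rw [Pi.star_apply, star_smul, star_one, Complex.star_def]
  have hXstar : star X = Matrix.diagonal fun p => ((starRingEnd ℂ) (ω ^ p.val)) • (1 : D) := by
    rw [hX, Matrix.star_eq_conjTranspose, Matrix.diagonal_conjTranspose, hstarf]
  constructor
  · intro j k
    ext p q
    rw [hXstar, hX, Matrix.mul_diagonal, Matrix.diagonal_mul, hT]
    rw [smul_mul_assoc, one_mul, mul_smul_comm, mul_one]
    simp only [Matrix.smul_apply, Matrix.sum_apply, Matrix.single, Matrix.of_apply,
      smul_ite, smul_zero, Finset.smul_sum, smul_smul]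
    refine Finset.sum_congr rfl fun l _ => Finset.sum_congr rfl fun m _ => ?_
    split_ifs with h
    · obtain ⟨h1, h2⟩ := h
      have hpq : p - q = j - k := by rw [← h1, ← h2]; ring
      congr 1
      have hk := key p q
      rw [hpq] at hk
      linear_combination ((N : ℂ)⁻¹ * ω ^ ((j - k) * l).val) * hk
    · simp
  · intro j k
    ext p q
    have hZs : star Z = Matrix.of fun p q => if q = p + 1 then (1 : D) else 0 := by
      rw [hZ, Matrix.star_eq_conjTranspose]
      ext a b
      simp only [Matrix.conjTranspose_apply, Matrix.of_apply, apply_ite (star : D → D),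
        star_one, star_zero]
    rw [hZs, hZ]
    have hL : ∀ A : Matrix (ZMod N) (ZMod N) D,
        ((Matrix.of (fun p q => if q = p + 1 then (1 : D) else 0) : Matrix (ZMod N) (ZMod N) D) * A *
        (Matrix.of (fun p q => if p = q + 1 then (1 : D) else 0) : Matrix (ZMod N) (ZMod N) D)) p q
          = A (p + 1) (q + 1) := by
      intro A
      rw [Matrix.mul_apply]
      simp only [Matrix.mul_apply, Matrix.of_apply, ite_mul, one_mul, zero_mul,
        mul_ite, mul_one, mul_zero]
      rw [Finset.sum_eq_single (q + 1)]
      · rw [if_pos rfl, Finset.sum_eq_single (p + 1)]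
        · rw [if_pos rfl]
        · intro b _ hb; rw [if_neg hb]
        · intro h; exact absurd (Finset.mem_univ _) h
      · intro b _ hb
        rw [if_neg hb]
      · intro h; exact absurd (Finset.mem_univ _) h
    rw [hL, hT, hT]
    have hjk : j - 1 - (k - 1) = j - k := by ring
    rw [hjk]
    simp only [Matrix.smul_apply, Matrix.sum_apply, Matrix.single, Matrix.of_apply,
      smul_ite, smul_zero]
    congr 1
    refine Finset.sum_congr rfl fun l _ => Finset.sum_congr rfl fun m _ => ?_
    have hc : (j - m = p + 1 ∧ k - m = q + 1) ↔ (j - 1 - m = p ∧ k - 1 - m = q) := by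
      constructor <;> rintro ⟨h1, h2⟩ <;>
        exact ⟨by linear_combination h1, by linear_combination h2⟩
    rw [if_congr hc rfl rfl]
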